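/- Graham scan invariant for leftward insertion: let S be a finite planar point set with upper hull vertex sequence v_1, ..., v_k (left to right), and let p be a point strictly left of all of S. Let j be the smallest index such that for all i > j, the points p, v_j, v_i make a right turn (v_i is strictly below line p v_j). Then the upper hull of S ∪ {p} is p, v_j, v_{j+1}, ..., v_k. -/

import Mathlib

open Finset

/-- Signed cross product (orientation) of points `a`, `b`, `c`: positive iff `c` is
strictly above the line through `a` and `b` (when `a.1 < b.1`). -/
def cross (a b c : ℝ × ℝ) : ℝ :=
  (b.1 - a.1) * (c.2 - a.2) - (b.2 - a.2) * (c.1 - a.1)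

/-- `v` is a vertex of the upper convex hull of `T`: it is a point of `T` that is not
strictly below any segment joining two other points of `T`. -/
def UpperVertex (T : Finset (ℝ × ℝ)) (v : ℝ × ℝ) : Prop :=
  v ∈ T ∧ ∀ a ∈ T, ∀ b ∈ T, a.1 < v.1 → v.1 < b.1 → 0 ≤ cross a b v

/-- General position: distinct x-coordinates and no three collinear. -/
def GenPos (T : Finset (ℝ × ℝ)) : Prop :=
  (∀ p ∈ T, ∀ q ∈ T, p ≠ q → p.1 ≠ q.1) ∧
  (∀ p ∈ T, ∀ q ∈ T, ∀ r ∈ T, p ≠ q → q ≠ r → p ≠ r → cross p q r ≠ 0)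

/-- Every point of `S1` is strictly to the left of every point of `S2`. -/
def XSep (S1 S2 : Finset (ℝ × ℝ)) : Prop :=
  ∀ p ∈ S1, ∀ q ∈ S2, p.1 < q.1

/-- `(t1, t2)` is an upper common tangent of the x-separated sets `S1`, `S2`:
all points of `S1 ∪ S2` lie on or below the line through `t1` and `t2`. -/
def UCT (S1 S2 : Finset (ℝ × ℝ)) (t1 t2 : ℝ × ℝ) : Prop :=
  t1 ∈ S1 ∧ t2 ∈ S2 ∧ ∀ x ∈ S1 ∪ S2, cross t1 t2 x ≤ 0

lemma cross_swap (a b c : ℝ × ℝ) : cross a c b = -cross a b c := by unfold cross; ring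

lemma cross_self2 (a b : ℝ × ℝ) : cross a b a = 0 := by unfold cross; ring

lemma cross_self1 (a b : ℝ × ℝ) : cross a a b = 0 := by unfold cross; ring

lemma cross_self3 (a b : ℝ × ℝ) : cross a b b = 0 := by unfold cross; ring

lemma chain (a b c d : ℝ × ℝ) (h1 : a.1 < b.1) (h2 : b.1 < c.1) (h3 : c.1 < d.1)
    (t1 : cross a b c ≤ 0) (t2 : cross b c d ≤ 0) : cross a c d ≤ 0 := by
  have key : (c.1 - b.1) * cross a c d
      = (d.1 - c.1) * cross a b c + (c.1 - a.1) * cross b c d := by unfold cross; ring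
  nlinarith [mul_nonpos_of_nonneg_of_nonpos (by linarith : (0:ℝ) ≤ d.1 - c.1) t1,
    mul_nonpos_of_nonneg_of_nonpos (by linarith : (0:ℝ) ≤ c.1 - a.1) t2]

lemma interp (p q a b c : ℝ × ℝ) :
    (c.1 - a.1) * cross p q b
      = (c.1 - b.1) * cross p q a + (b.1 - a.1) * cross p q c
        + (q.1 - p.1) * cross a c b := by unfold cross; ring

theorem stmt8 (S : Finset (ℝ × ℝ)) (p : ℝ × ℝ) (hgp : GenPos (insert p S))
    (hleft : ∀ x ∈ S, p.1 < x.1)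
    (L : List (ℝ × ℝ)) (hsort : L.Pairwise (fun a b => a.1 < b.1))
    (hmem : ∀ x, x ∈ L ↔ UpperVertex S x)
    (j : Fin L.length)
    (hj : ∀ i : Fin L.length, j < i → cross p (L.get j) (L.get i) < 0)
    (hmin : ∀ j' : Fin L.length,
      (∀ i : Fin L.length, j' < i → cross p (L.get j') (L.get i) < 0) → j ≤ j') :
    ∀ w, UpperVertex (insert p S) w ↔
      (w = p ∨ ∃ i : Fin L.length, j ≤ i ∧ w = L.get i) := by
  -- basic facts
  have hvV : ∀ i : Fin L.length, UpperVertex S (L.get i) := fun i =>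
    (hmem (L.get i)).1 (L.get_mem i)
  have hvS : ∀ i : Fin L.length, L.get i ∈ S := fun i => (hvV i).1
  have hxlt : ∀ i m : Fin L.length, i < m → (L.get i).1 < (L.get m).1 := fun i m h =>
    hsort.rel_get_of_lt h
  have hpx : ∀ i : Fin L.length, p.1 < (L.get i).1 := fun i => hleft _ (hvS i)
  -- distinct x within insert p S
  have hdx : ∀ a ∈ S, a.1 = (L.get j).1 → a = L.get j := by
    intro a ha hax
    by_contra hne
    exact hgp.1 a (mem_insert_of_mem ha) (L.get j) (mem_insert_of_mem (hvS j)) hne hax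
  -- Claim C: every point of S strictly right of v_j is strictly below line p v_j
  have hC : ∀ b ∈ S, (L.get j).1 < b.1 → cross p (L.get j) b < 0 := by
    intro b hb hbx
    set vj := L.get j with hvj
    by_contra hcon
    push_neg at hcon
    have hFne : (S.filter (fun x => vj.1 < x.1)).Nonempty :=
      ⟨b, mem_filter.2 ⟨hb, hbx⟩⟩
    obtain ⟨m, hmF, hmax⟩ :=
      Finset.exists_max_image (S.filter (fun x => vj.1 < x.1)) (fun x => cross p vj x) hFne
    have hmS : m ∈ S := (mem_filter.1 hmF).1
    have hmx : vj.1 < m.1 := (mem_filter.1 hmF).2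
    have hm0 : 0 ≤ cross p vj m := le_trans hcon (hmax b (mem_filter.2 ⟨hb, hbx⟩))
    -- m is not an upper vertex of S
    have hmnv : ¬ UpperVertex S m := by
      intro hv
      obtain ⟨idx, hidx⟩ := List.mem_iff_get.1 ((hmem m).2 hv)
      have hji : j < idx := by
        rcases lt_trichotomy j idx with h | h | h
        · exact h
        · rw [← hidx, ← h] at hmx; exact absurd hmx (lt_irrefl _)
        · have := hxlt idx j h; rw [hidx] at this; exact absurd (lt_trans hmx this) (lt_irrefl _)
      have := hj idx hji
      rw [hidx] at this
      exact absurd hm0 (not_le.2 this)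
    rw [UpperVertex, not_and] at hmnv
    push_neg at hmnv
    obtain ⟨a, ha, c, hc, hax, hcx, hacm⟩ := hmnv hmS
    have hcF : c ∈ S.filter (fun x => vj.1 < x.1) :=
      mem_filter.2 ⟨hc, lt_trans hmx hcx⟩
    have hmaxc : cross p vj c ≤ cross p vj m := hmax c hcF
    have key1 := interp p vj a m c
    have hK : 0 < vj.1 - p.1 := by have := hpx j; rw [← hvj] at this; linarith
    rcases le_or_gt a.1 vj.1 with hav | hav
    · -- a is left of (or equal to) v_j : use that v_j is above segment a c
      have hacvj : 0 ≤ cross a c vj := by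
        rcases lt_or_eq_of_le hav with h | h
        · exact (hvV j).2 a ha c hc h (lt_trans hmx hcx)
        · have : a = vj := hdx a ha h
          rw [this, cross_swap, cross_self1]
          simp
      have key2 := interp p vj a vj c
      rw [cross_self3] at key2
      -- derive contradiction
      have hA : (c.1 - a.1) * cross p vj m
          < (c.1 - m.1) * cross p vj a + (m.1 - a.1) * cross p vj c := by
        nlinarith [mul_pos hK (neg_pos.2 hacm)]
      have hB : (c.1 - vj.1) * cross p vj a + (vj.1 - a.1) * cross p vj c ≤ 0 := by
        nlinarith [mul_nonneg (le_of_lt hK) hacvj]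
      nlinarith [mul_lt_mul_of_pos_left hA (by linarith : (0:ℝ) < c.1 - vj.1),
        mul_le_mul_of_nonneg_left hB (by linarith : (0:ℝ) ≤ c.1 - m.1),
        mul_le_mul_of_nonneg_left hmaxc
          (mul_nonneg (by linarith : (0:ℝ) ≤ c.1 - a.1) (by linarith : (0:ℝ) ≤ m.1 - vj.1)),
        mul_nonneg (mul_nonneg (by linarith : (0:ℝ) ≤ c.1 - m.1)
          (by linarith : (0:ℝ) ≤ c.1 - a.1)) hm0]
    · -- a is strictly right of v_j : maximality applies to a and c
      have haF : a ∈ S.filter (fun x => vj.1 < x.1) := mem_filter.2 ⟨ha, hav⟩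
      have hmaxa : cross p vj a ≤ cross p vj m := hmax a haF
      nlinarith [mul_pos hK (neg_pos.2 hacm),
        mul_le_mul_of_nonneg_left hmaxa (by linarith : (0:ℝ) ≤ c.1 - m.1),
        mul_le_mul_of_nonneg_left hmaxc (by linarith : (0:ℝ) ≤ m.1 - a.1)]
  -- Need1: points of S right of v_i (i ≥ j) are on/below line p v_i
  have need1 : ∀ i : Fin L.length, j ≤ i → ∀ b ∈ S, (L.get i).1 < b.1 →
      cross p (L.get i) b ≤ 0 := by
    intro i hji b hb hbx
    rcases eq_or_lt_of_le hji with h | h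
    · exact le_of_lt (h ▸ hC b hb (h ▸ hbx))
    · have t1 : cross p (L.get j) (L.get i) ≤ 0 := le_of_lt (hj i h)
      have t2 : cross (L.get j) (L.get i) b ≤ 0 := by
        have := (hvV i).2 (L.get j) (hvS j) b hb (hxlt j i h) hbx
        rw [cross_swap]; linarith
      exact chain p (L.get j) (L.get i) b (hpx j) (hxlt j i h) hbx t1 t2
  intro w
  constructor
  · intro hw
    by_cases hwp : w = p
    · exact Or.inl hwp
    · right
      have hwS : w ∈ S := by
        rcases mem_insert.1 hw.1 with h | h
        · exact absurd h hwp
        · exact h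
      have hwV : UpperVertex S w :=
        ⟨hwS, fun a ha c hc h1 h2 =>
          hw.2 a (mem_insert_of_mem ha) c (mem_insert_of_mem hc) h1 h2⟩
      obtain ⟨i, hi⟩ := List.mem_iff_get.1 ((hmem w).2 hwV)
      refine ⟨i, ?_, hi.symm⟩
      by_contra hij
      push_neg at hij
      have hne : ¬ (∀ m : Fin L.length, i < m → cross p (L.get i) (L.get m) < 0) := by
        intro h; exact absurd (hmin i h) (not_le.2 hij)
      push_neg at hne
      obtain ⟨m, him, hcm⟩ := hne
      -- genpos gives strict positivity
      have hne1 : p ≠ L.get i := fun h => absurd (hpx i) (h ▸ lt_irrefl _)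
      have hne2 : L.get i ≠ L.get m := fun h => absurd (hxlt i m him) (h ▸ lt_irrefl _)
      have hne3 : p ≠ L.get m := fun h => absurd (hpx m) (h ▸ lt_irrefl _)
      have hpos : 0 < cross p (L.get i) (L.get m) :=
        lt_of_le_of_ne hcm (Ne.symm (hgp.2 p (mem_insert_self p S) (L.get i)
          (mem_insert_of_mem (hvS i)) (L.get m) (mem_insert_of_mem (hvS m)) hne1 hne2 hne3))
      have := hw.2 p (mem_insert_self p S) (L.get m) (mem_insert_of_mem (hvS m))
        (hi ▸ hpx i) (hi ▸ hxlt i m him)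
      rw [← hi, cross_swap] at this
      linarith
  · intro hw
    rcases hw with hq | ⟨i, hji, hq⟩ <;> rw [hq]
    · refine ⟨mem_insert_self p S, fun a ha c hc h1 h2 => ?_⟩
      rcases mem_insert.1 ha with rfl | h
      · exact absurd h1 (lt_irrefl _)
      · exact absurd (lt_trans (hleft a h) h1) (lt_irrefl _)
    · refine ⟨mem_insert_of_mem (hvS i), fun a ha c hc h1 h2 => ?_⟩
      have hcS : c ∈ S := by
        rcases mem_insert.1 hc with rfl | h
        · exact absurd (lt_trans (hpx i) h2) (lt_irrefl _)
        · exact h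
      rcases mem_insert.1 ha with rfl | haS
      · rw [cross_swap]
        have := need1 i hji c hcS h2
        linarith
      · exact (hvV i).2 a haS c hcS h1 h2
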